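/- Stability of the L1 scheme for a scalar mode: fix λ > 0, 0 < α < 1, τ > 0, and let b_j = ((j+1)^{1-α} - j^{1-α})/Γ(2-α). Define U^0 = v > 0 and for n ≥ 1 let U^n solve τ^{-α}[b_0 U^n - b_{n-1} U^0 + ∑_{j=1}^{n-1} (b_j - b_{j-1}) U^{n-j}] + λ U^n = 0. Then 0 < U^n ≤ v for all n, and U^n is bounded by v uniformly in n, τ and λ. -/

import Mathlib

/-- Stability of the L1 scheme for `∂_t^α u + λ u = 0`, `u(0) = v > 0`:
the discrete solution stays in `(0, v]`, uniformly in `n`, `τ` and `λ`. -/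
theorem stmt19 (α lam τ v : ℝ) (hα0 : 0 < α) (hα1 : α < 1) (hlam : 0 < lam)
    (hτ : 0 < τ) (hv : 0 < v)
    (b : ℕ → ℝ)
    (hb : ∀ j : ℕ, b j = (((j : ℝ) + 1) ^ (1 - α) - (j : ℝ) ^ (1 - α)) / Real.Gamma (2 - α))
    (U : ℕ → ℝ) (hU0 : U 0 = v)
    (hrec : ∀ n : ℕ, 1 ≤ n →
      τ ^ (-α) * (b 0 * U n - b (n - 1) * U 0 +
          ∑ j ∈ Finset.Ico 1 n, (b j - b (j - 1)) * U (n - j)) + lam * U n = 0) :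
    ∀ n, 0 < U n ∧ U n ≤ v := by
  have hΓ : 0 < Real.Gamma (2 - α) := Real.Gamma_pos_of_pos (by linarith)
  have hbpos : ∀ j : ℕ, 0 < b j := by
    intro j
    rw [hb]
    apply div_pos _ hΓ
    have : (j : ℝ) ^ (1 - α) < ((j : ℝ) + 1) ^ (1 - α) :=
      Real.rpow_lt_rpow (Nat.cast_nonneg j) (by linarith) (by linarith)
    linarith
  have hbdec : ∀ j : ℕ, b (j + 1) < b j := by
    intro j
    have sc := Real.strictConcaveOn_rpow (p := 1 - α) (by linarith) (by linarith)
    have h := sc.2 (Set.mem_Ici.mpr (Nat.cast_nonneg j))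
      (Set.mem_Ici.mpr (by positivity : (0:ℝ) ≤ (j:ℝ) + 2))
      (by norm_num : (j:ℝ) ≠ (j:ℝ) + 2)
      (by norm_num : (0:ℝ) < 1/2) (by norm_num : (0:ℝ) < 1/2) (by norm_num)
    simp only [smul_eq_mul] at h
    have heq : (1/2 : ℝ) * (j:ℝ) + (1/2) * ((j:ℝ) + 2) = (j:ℝ) + 1 := by ring
    rw [heq] at h
    rw [hb, hb]
    rw [div_lt_div_iff₀ hΓ hΓ]
    push_cast
    have h2 : ((j:ℝ) + 1 + 1) = (j:ℝ) + 2 := by ring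
    rw [h2]
    nlinarith [hΓ]
  intro n
  induction n using Nat.strong_induction_on with
  | _ n ih =>
    match n with
    | 0 => rw [hU0]; exact ⟨hv, le_refl v⟩
    | (m + 1) =>
      have h := hrec (m + 1) (Nat.succ_le_succ (Nat.zero_le m))
      simp only [Nat.add_sub_cancel, hU0] at h
      set S := ∑ j ∈ Finset.Ico 1 (m + 1), (b j - b (j - 1)) * U (m + 1 - j) with hS
      have hτα : (0:ℝ) < τ ^ α := Real.rpow_pos_of_pos hτ α
      have hx : τ ^ (-α) * τ ^ α = 1 := by
        rw [← Real.rpow_add hτ]; simp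
      have hX : b 0 * U (m + 1) - b m * v + S = τ ^ α * (-(lam * U (m + 1))) := by
        have h' : τ ^ (-α) * (b 0 * U (m + 1) - b m * v + S) = -(lam * U (m + 1)) := by
          linarith
        calc b 0 * U (m + 1) - b m * v + S
            = τ ^ α * (τ ^ (-α) * (b 0 * U (m + 1) - b m * v + S)) := by
              rw [← mul_assoc, mul_comm (τ ^ α), hx, one_mul]
          _ = τ ^ α * (-(lam * U (m + 1))) := by rw [h']
      have hc : 0 < b 0 + lam * τ ^ α := by
        have := mul_pos hlam hτα
        linarith [hbpos 0]
      have hkey : (b 0 + lam * τ ^ α) * U (m + 1) = b m * v - S := by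
        linear_combination hX
      -- negated sum is nonneg and bounded
      have hterm : ∀ j ∈ Finset.Ico 1 (m + 1),
          0 < (b (j - 1) - b j) * U (m + 1 - j) ∧
          (b (j - 1) - b j) * U (m + 1 - j) ≤ (b (j - 1) - b j) * v := by
        intro j hj
        obtain ⟨hj1, hj2⟩ := Finset.mem_Ico.mp hj
        have hIH := ih (m + 1 - j) (Nat.sub_lt (Nat.succ_pos m) hj1)
        have hbd : 0 < b (j - 1) - b j := by
          have := hbdec (j - 1)
          rw [Nat.sub_add_cancel hj1] at this
          linarith
        exact ⟨mul_pos hbd hIH.1, mul_le_mul_of_nonneg_left hIH.2 hbd.le⟩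
      have hnegS : -S = ∑ j ∈ Finset.Ico 1 (m + 1), (b (j - 1) - b j) * U (m + 1 - j) := by
        rw [hS, ← Finset.sum_neg_distrib]
        exact Finset.sum_congr rfl fun j _ => by ring
      have hSnonpos : 0 ≤ -S := by
        rw [hnegS]
        exact Finset.sum_nonneg fun j hj => (hterm j hj).1.le
      have htel : ∑ j ∈ Finset.Ico 1 (m + 1), (b (j - 1) - b j) = b 0 - b m := by
        rw [Finset.sum_Ico_eq_sum_range]
        simp only [Nat.add_sub_cancel, Nat.add_sub_cancel_left]
        have : ∀ i, b (1 + i) = b (i + 1) := fun i => by rw [Nat.add_comm]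
        simp only [this]
        exact Finset.sum_range_sub' b m
      have hSbound : -S ≤ (b 0 - b m) * v := by
        rw [hnegS, ← htel, Finset.sum_mul]
        exact Finset.sum_le_sum fun j hj => (hterm j hj).2
      have hRpos : 0 < b m * v - S := by
        have := mul_pos (hbpos m) hv
        linarith
      have hRle : b m * v - S ≤ (b 0 + lam * τ ^ α) * v := by
        nlinarith [mul_pos hlam hτα]
      constructor
      · have hpos : 0 < (b 0 + lam * τ ^ α) * U (m + 1) := hkey ▸ hRpos
        rcases mul_pos_iff.mp hpos with ⟨_, h2⟩ | ⟨h1, _⟩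
        · exact h2
        · linarith
      · rw [← mul_le_mul_iff_of_pos_left hc, hkey]
        exact hRle
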